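/- Lipschitz continuity of the scaled Fraenkel asymmetry: for any measurable sets E, E' ⊂ ℝⁿ of positive finite measure, one has | |E| D(E) − |E'| D(E') | ≤ 2 |E Δ E'|. -/

import Mathlib

open MeasureTheory Metric Set
open scoped Pointwise ENNReal

/-- The Fraenkel asymmetry of a measurable set `E ⊆ ℝⁿ`. -/
noncomputable def fraenkelAsymmetry {n : ℕ} (E : Set (EuclideanSpace ℝ (Fin n))) : ℝ :=
  sInf {t : ℝ | ∃ (x : EuclideanSpace ℝ (Fin n)) (r : ℝ),
    volume (ball x r) = volume E ∧
    t = (volume (symmDiff E (ball x r))).toReal / (volume E).toReal}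

namespace FraenkelAux

variable {n : ℕ}

lemma exists_ball_volume (hn : 1 ≤ n) (x : EuclideanSpace ℝ (Fin n)) {m : ℝ≥0∞}
    (h0 : 0 < m) (hfin : m < ⊤) : ∃ r : ℝ, volume (ball x r) = m := by
  set c : ℝ≥0∞ := volume (ball (0 : EuclideanSpace ℝ (Fin n)) 1) with hc
  have : Nontrivial (EuclideanSpace ℝ (Fin n)) := by
    refine ⟨EuclideanSpace.single ⟨0, hn⟩ 1, 0, fun h => ?_⟩
    have := congrArg (fun v => v ⟨0, hn⟩) h
    simp at this
  have hcpos : 0 < c := measure_ball_pos _ _ one_pos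
  have hcfin : c < ⊤ := measure_ball_lt_top
  set t : ℝ := m.toReal / c.toReal with ht
  have htpos : 0 < t := div_pos (ENNReal.toReal_pos h0.ne' hfin.ne)
    (ENNReal.toReal_pos hcpos.ne' hcfin.ne)
  refine ⟨t ^ ((n : ℝ)⁻¹), ?_⟩
  have hball : volume (ball x (t ^ ((n : ℝ)⁻¹))) =
      ENNReal.ofReal ((t ^ ((n : ℝ)⁻¹)) ^ (Module.finrank ℝ (EuclideanSpace ℝ (Fin n)))) * c := by
    rw [hc, Measure.addHaar_ball]
    positivity
  have hrank : Module.finrank ℝ (EuclideanSpace ℝ (Fin n)) = n := finrank_euclideanSpace_fin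
  have hpow : (t ^ ((n : ℝ)⁻¹)) ^ n = t := by
    rw [← Real.rpow_natCast (t ^ ((n : ℝ)⁻¹)) n, ← Real.rpow_mul htpos.le,
      inv_mul_cancel₀ (by exact_mod_cast (by omega : n ≠ 0) ∘ Nat.cast_injective.eq_iff.mp |>
        fun h => h), Real.rpow_one]
  rw [hball, hrank, hpow, ht, ENNReal.ofReal_div_of_pos (ENNReal.toReal_pos hcpos.ne' hcfin.ne),
    ENNReal.ofReal_toReal hfin.ne, ENNReal.ofReal_toReal hcfin.ne,
    ENNReal.div_mul_cancel hcpos.ne' hcfin.ne]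

/-- The unnormalized Fraenkel quantity. -/
noncomputable def g (E : Set (EuclideanSpace ℝ (Fin n))) : ℝ :=
  sInf {s : ℝ | ∃ (x : EuclideanSpace ℝ (Fin n)) (r : ℝ),
    volume (ball x r) = volume E ∧ s = (volume (symmDiff E (ball x r))).toReal}

lemma g_set_nonempty (hn : 1 ≤ n) (E : Set (EuclideanSpace ℝ (Fin n)))
    (h0 : 0 < volume E) (hfin : volume E < ⊤) :
    {s : ℝ | ∃ (x : EuclideanSpace ℝ (Fin n)) (r : ℝ),
      volume (ball x r) = volume E ∧ s = (volume (symmDiff E (ball x r))).toReal}.Nonempty := by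
  obtain ⟨r, hr⟩ := exists_ball_volume hn 0 h0 hfin
  exact ⟨_, 0, r, hr, rfl⟩

lemma g_set_bddBelow (E : Set (EuclideanSpace ℝ (Fin n))) :
    BddBelow {s : ℝ | ∃ (x : EuclideanSpace ℝ (Fin n)) (r : ℝ),
      volume (ball x r) = volume E ∧ s = (volume (symmDiff E (ball x r))).toReal} := by
  refine ⟨0, fun s hs => ?_⟩
  obtain ⟨x, r, -, rfl⟩ := hs
  exact ENNReal.toReal_nonneg

lemma mul_fraenkel_eq_g (E : Set (EuclideanSpace ℝ (Fin n)))
    (h0 : 0 < volume E) (hfin : volume E < ⊤) :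
    (volume E).toReal * fraenkelAsymmetry E = g E := by
  set c : ℝ := (volume E).toReal with hc
  have hcpos : 0 < c := ENNReal.toReal_pos h0.ne' hfin.ne
  have hset : {t : ℝ | ∃ (x : EuclideanSpace ℝ (Fin n)) (r : ℝ),
      volume (ball x r) = volume E ∧
      t = (volume (symmDiff E (ball x r))).toReal / (volume E).toReal} =
      c⁻¹ • {s : ℝ | ∃ (x : EuclideanSpace ℝ (Fin n)) (r : ℝ),
      volume (ball x r) = volume E ∧ s = (volume (symmDiff E (ball x r))).toReal} := by
    ext t
    constructor
    · rintro ⟨x, r, h1, rfl⟩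
      exact ⟨_, ⟨x, r, h1, rfl⟩, by simp [smul_eq_mul, div_eq_inv_mul, hc]⟩
    · rintro ⟨s, ⟨x, r, h1, rfl⟩, rfl⟩
      exact ⟨x, r, h1, by simp [smul_eq_mul, div_eq_inv_mul, hc]⟩
  rw [fraenkelAsymmetry, hset, Real.sInf_smul_of_nonneg (inv_nonneg.mpr hcpos.le), g,
    smul_eq_mul, ← mul_assoc, mul_inv_cancel₀ hcpos.ne', one_mul]

lemma abs_toReal_sub_le (A B : Set (EuclideanSpace ℝ (Fin n)))
    (hfinA : volume A < ⊤) (hfinB : volume B < ⊤) :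
    |(volume A).toReal - (volume B).toReal| ≤ (volume (symmDiff A B)).toReal := by
  have hsub : symmDiff A B ⊆ A ∪ B := symmDiff_subset_union
  have hdfin : volume (symmDiff A B) < ⊤ :=
    lt_of_le_of_lt (measure_mono hsub) (lt_of_le_of_lt (measure_union_le _ _)
      (ENNReal.add_lt_top.mpr ⟨hfinA, hfinB⟩))
  rw [abs_sub_le_iff]
  constructor
  · have h1 : volume A ≤ volume B + volume (symmDiff A B) := by
      refine le_trans (measure_mono (fun x hx => ?_)) (measure_union_le _ _)
      by_cases hxB : x ∈ B
      · exact Or.inl hxB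
      · exact Or.inr (Or.inl ⟨hx, hxB⟩)
    have := ENNReal.toReal_mono (by simp [hfinB.ne, hdfin.ne]) h1
    rw [ENNReal.toReal_add hfinB.ne hdfin.ne] at this
    linarith
  · have h1 : volume B ≤ volume A + volume (symmDiff A B) := by
      refine le_trans (measure_mono (fun x hx => ?_)) (measure_union_le _ _)
      by_cases hxA : x ∈ A
      · exact Or.inl hxA
      · exact Or.inr (Or.inr ⟨hx, hxA⟩)
    have := ENNReal.toReal_mono (by simp [hfinA.ne, hdfin.ne]) h1
    rw [ENNReal.toReal_add hfinA.ne hdfin.ne] at this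
    linarith

lemma ball_symmDiff_le_aux (x : EuclideanSpace ℝ (Fin n)) {r s : ℝ} (hrs : r ≤ s) :
    (volume (symmDiff (ball x r) (ball x s))).toReal ≤
      |(volume (ball x r)).toReal - (volume (ball x s)).toReal| := by
  have hsub : ball x r ⊆ ball x s := ball_subset_ball hrs
  have hdiff : symmDiff (ball x r) (ball x s) = ball x s \ ball x r := by
    rw [Set.symmDiff_def, Set.diff_eq_empty.mpr hsub, Set.empty_union]
  have hfin : volume (ball x s) < ⊤ := measure_ball_lt_top
  rw [hdiff, measure_diff hsub measurableSet_ball.nullMeasurableSet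
    (lt_of_le_of_lt (measure_mono hsub) hfin).ne,
    ENNReal.toReal_sub_of_le (measure_mono hsub) hfin.ne]
  rw [abs_sub_comm]
  exact le_abs_self _

lemma ball_symmDiff_le (x : EuclideanSpace ℝ (Fin n)) (r s : ℝ) :
    (volume (symmDiff (ball x r) (ball x s))).toReal ≤
      |(volume (ball x r)).toReal - (volume (ball x s)).toReal| := by
  rcases le_total r s with h | h
  · exact ball_symmDiff_le_aux x h
  · rw [symmDiff_comm, abs_sub_comm]
    exact ball_symmDiff_le_aux x h

lemma g_le (hn : 1 ≤ n) (E E' : Set (EuclideanSpace ℝ (Fin n)))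
    (h0 : 0 < volume E) (hfin : volume E < ⊤)
    (h0' : 0 < volume E') (hfin' : volume E' < ⊤) :
    g E ≤ g E' + 2 * (volume (symmDiff E E')).toReal := by
  set δ : ℝ := (volume (symmDiff E E')).toReal with hδ
  have hδfin : volume (symmDiff E E') < ⊤ :=
    lt_of_le_of_lt (measure_mono symmDiff_subset_union)
      (lt_of_le_of_lt (measure_union_le _ _) (ENNReal.add_lt_top.mpr ⟨hfin, hfin'⟩))
  have key : g E - 2 * δ ≤ g E' := by
    refine le_csInf (g_set_nonempty hn E' h0' hfin') ?_
    rintro s' ⟨x, r, hvol, rfl⟩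
    obtain ⟨r'', hr''⟩ := exists_ball_volume hn x h0 hfin
    have hmem : (volume (symmDiff E (ball x r''))).toReal ∈
        {s : ℝ | ∃ (y : EuclideanSpace ℝ (Fin n)) (ρ : ℝ),
          volume (ball y ρ) = volume E ∧ s = (volume (symmDiff E (ball y ρ))).toReal} :=
      ⟨x, r'', hr'', rfl⟩
    have h1 : g E ≤ (volume (symmDiff E (ball x r''))).toReal := csInf_le (g_set_bddBelow E) hmem
    -- triangle inequality for symmDiff
    have htri : symmDiff E (ball x r'') ⊆
        symmDiff E E' ∪ (symmDiff E' (ball x r) ∪ symmDiff (ball x r) (ball x r'')) := by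
      refine subset_trans (symmDiff_triangle E E' (ball x r'')) (union_subset_union_right _ ?_)
      exact symmDiff_triangle E' (ball x r) (ball x r'')
    have hballfin : volume (symmDiff (ball x r) (ball x r'')) < ⊤ :=
      lt_of_le_of_lt (measure_mono symmDiff_subset_union)
        (lt_of_le_of_lt (measure_union_le _ _)
          (ENNReal.add_lt_top.mpr ⟨measure_ball_lt_top, measure_ball_lt_top⟩))
    have hE'Bfin : volume (symmDiff E' (ball x r)) < ⊤ :=
      lt_of_le_of_lt (measure_mono symmDiff_subset_union)
        (lt_of_le_of_lt (measure_union_le _ _)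
          (ENNReal.add_lt_top.mpr ⟨hfin', measure_ball_lt_top⟩))
    have h2 : (volume (symmDiff E (ball x r''))).toReal ≤
        δ + ((volume (symmDiff E' (ball x r))).toReal +
          (volume (symmDiff (ball x r) (ball x r''))).toReal) := by
      have hle : volume (symmDiff E (ball x r'')) ≤
          volume (symmDiff E E') + (volume (symmDiff E' (ball x r)) +
            volume (symmDiff (ball x r) (ball x r''))) :=
        le_trans (measure_mono htri) (le_trans (measure_union_le _ _)
          (add_le_add_right (measure_union_le _ _) _))
      have hrhsfin : volume (symmDiff E E') + (volume (symmDiff E' (ball x r)) +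
          volume (symmDiff (ball x r) (ball x r''))) ≠ ⊤ := by
        simp [hδfin.ne, hE'Bfin.ne, hballfin.ne]
      have := ENNReal.toReal_mono hrhsfin hle
      rwa [ENNReal.toReal_add hδfin.ne (by simp [hE'Bfin.ne, hballfin.ne]),
        ENNReal.toReal_add hE'Bfin.ne hballfin.ne] at this
    have h3 : (volume (symmDiff (ball x r) (ball x r''))).toReal ≤ δ := by
      refine le_trans (ball_symmDiff_le x r r'') ?_
      rw [hvol, hr'']
      rw [abs_sub_comm]
      exact abs_toReal_sub_le E E' hfin hfin'
    linarith
  linarith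

end FraenkelAux

/-- Lipschitz continuity of the scaled Fraenkel asymmetry:
`| |E| D(E) − |E'| D(E') | ≤ 2 |E Δ E'|`. -/
theorem abs_measure_mul_fraenkel_sub_le {n : ℕ} (hn : 1 ≤ n)
    (E E' : Set (EuclideanSpace ℝ (Fin n)))
    (hE : MeasurableSet E) (hE' : MeasurableSet E')
    (h0 : 0 < volume E) (hfin : volume E < ⊤)
    (h0' : 0 < volume E') (hfin' : volume E' < ⊤) :
    |(volume E).toReal * fraenkelAsymmetry E -
      (volume E').toReal * fraenkelAsymmetry E'| ≤
      2 * (volume (symmDiff E E')).toReal := by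
  rw [FraenkelAux.mul_fraenkel_eq_g E h0 hfin, FraenkelAux.mul_fraenkel_eq_g E' h0' hfin',
    abs_sub_le_iff]
  constructor
  · linarith [FraenkelAux.g_le hn E E' h0 hfin h0' hfin']
  · have := FraenkelAux.g_le hn E' E h0' hfin' h0 hfin
    rw [symmDiff_comm E' E] at this
    linarith
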